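/- Let K be a commutative ring with unity, G a group, σ an anti-automorphism of G of order two, and f: G → U(K) a group homomorphism. The map x = Σ α_g g ↦ x^σ = Σ α_g f(g) σ(g) is an involution of the group ring KG if and only if g·σ(g) ∈ Ker(f) for all g ∈ G. -/

import Mathlib

noncomputable def sigmaMap {K G : Type*} [CommRing K] [Group G] (σ : G → G) (f : G →* Kˣ)
    (x : MonoidAlgebra K G) : MonoidAlgebra K G :=
  Finsupp.sum x.coeff fun g a => MonoidAlgebra.single (σ g) (a * (f g : K))

lemma sigmaMap_single {K G : Type*} [CommRing K] [Group G] (σ : G → G) (f : G →* Kˣ)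
    (g : G) (a : K) :
    sigmaMap σ f (MonoidAlgebra.single g a) = MonoidAlgebra.single (σ g) (a * (f g : K)) := by
  unfold sigmaMap
  rw [MonoidAlgebra.coeff_single]
  exact Finsupp.sum_single_index (by simp)

lemma sigmaMap_add {K G : Type*} [CommRing K] [Group G] (σ : G → G) (f : G →* Kˣ)
    (x y : MonoidAlgebra K G) :
    sigmaMap σ f (x + y) = sigmaMap σ f x + sigmaMap σ f y := by
  unfold sigmaMap
  rw [MonoidAlgebra.coeff_add]
  exact Finsupp.sum_add_index' (by simp) (by intro g a b; simp [add_mul, Finsupp.single_add, MonoidAlgebra.single_add])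

lemma sigmaMap_zero {K G : Type*} [CommRing K] [Group G] (σ : G → G) (f : G →* Kˣ) :
    sigmaMap σ f (0 : MonoidAlgebra K G) = 0 := by
  unfold sigmaMap; simp

/-- The map `x ↦ x^σ` is an involution of the group ring `KG` iff
`g * σ g ∈ Ker f` for all `g`. -/
theorem stmt_1 {K G : Type*} [CommRing K] [Group G] (σ : G → G)
    (hbij : Function.Bijective σ)
    (hanti : ∀ g h : G, σ (g * h) = σ h * σ g)
    (hord : ∀ g : G, σ (σ g) = g)
    (f : G →* Kˣ) :
    ((∀ x y : MonoidAlgebra K G, sigmaMap σ f (x + y) = sigmaMap σ f x + sigmaMap σ f y) ∧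
     (∀ x y : MonoidAlgebra K G, sigmaMap σ f (x * y) = sigmaMap σ f y * sigmaMap σ f x) ∧
     (∀ x : MonoidAlgebra K G, sigmaMap σ f (sigmaMap σ f x) = x)) ↔
    ∀ g : G, g * σ g ∈ f.ker := by
  constructor
  · rintro ⟨-, -, h3⟩ g
    have := h3 (MonoidAlgebra.single g 1)
    rw [sigmaMap_single, sigmaMap_single] at this
    have hc := congrArg (fun z : MonoidAlgebra K G => z.coeff g) this
    simp only [hord] at hc
    rw [MonoidAlgebra.coeff_single, Finsupp.single_eq_same, MonoidAlgebra.coeff_single,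
      Finsupp.single_eq_same] at hc
    have hK : ((f g : K) * (f (σ g) : K)) = 1 := by
      have : (1 : K) * (f g : K) * (f (σ g) : K) = 1 := hc
      simpa using this
    rw [MonoidHom.mem_ker, map_mul]
    ext
    simpa using hK
  · intro hker
    refine ⟨sigmaMap_add σ f, ?_, ?_⟩
    · intro x y
      induction x using MonoidAlgebra.induction_linear with
      | zero => simp [sigmaMap_zero]
      | add p q hp hq =>
        rw [add_mul, sigmaMap_add, sigmaMap_add, hp, hq, mul_add]
      | single g a =>
        induction y using MonoidAlgebra.induction_linear with
        | zero => simp [sigmaMap_zero]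
        | add p q hp hq =>
          rw [mul_add, sigmaMap_add, sigmaMap_add, hp, hq, add_mul]
        | single h b =>
          rw [MonoidAlgebra.single_mul_single, sigmaMap_single, sigmaMap_single,
            sigmaMap_single, MonoidAlgebra.single_mul_single, hanti, map_mul]
          congr 1
          push_cast
          ring
    · intro x
      induction x using MonoidAlgebra.induction_linear with
      | zero => simp [sigmaMap_zero]
      | add p q hp hq => rw [sigmaMap_add, sigmaMap_add, hp, hq]
      | single g a =>
        rw [sigmaMap_single, sigmaMap_single, hord]
        have h1 : f (g * σ g) = 1 := hker g
        have : (f g : K) * (f (σ g) : K) = 1 := by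
          rw [← Units.val_mul, ← map_mul, h1, Units.val_one]
        rw [mul_assoc, this, mul_one]
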